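/- arXiv:1810.02619 — 7 statements merged into one kernel-verified Lean document; each statement's English description precedes it below -/
import Mathlib

section
/- Let H be a complex Hilbert space and A₁, …, Aₙ bounded positive operators on H. Then for any vectors x₁, …, xₙ ∈ H, ‖∑ⱼ Aⱼ xⱼ‖² ≤ ‖∑ⱼ Aⱼ‖ · ∑ⱼ re ⟨Aⱼ xⱼ, xⱼ⟩. -/
open scoped ComplexInnerProductSpace

open RCLike in
/-- Generalized Cauchy–Schwarz for a positive operator. -/
lemma opSchwarz {H : Type*} [NormedAddCommGroup H] [InnerProductSpace ℂ H] [CompleteSpace H]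
    (T : H →L[ℂ] H) (hT : T.IsPositive) (u v : H) :
    ‖(⟪T u, v⟫ : ℂ)‖ ^ 2 ≤ (⟪T u, u⟫).re * (⟪T v, v⟫).re := by
  have hsa := hT.isSelfAdjoint
  have hadj : ∀ a b : H, (⟪a, T b⟫ : ℂ) = ⟪T a, b⟫ := by
    intro a b
    conv_rhs => rw [← hsa.adjoint_eq]
    rw [ContinuousLinearMap.adjoint_inner_left]
  let c : PreInnerProductSpace.Core ℂ H :=
  { inner := fun a b => ⟪T a, b⟫
    conj_inner_symm := fun a b => by
      show (starRingEnd ℂ) (⟪T b, a⟫ : ℂ) = ⟪T a, b⟫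
      rw [inner_conj_symm, hadj]
    re_inner_nonneg := fun a => hT.re_inner_nonneg_left a
    add_left := fun a b d => by simp [map_add, inner_add_left]
    smul_left := fun a b r => by simp [map_smul, inner_smul_left]; ring }
  have h := InnerProductSpace.Core.inner_mul_inner_self_le (𝕜 := ℂ) (F := H) (c := c) u v
  have h2 : ‖(⟪T u, v⟫ : ℂ)‖ * ‖(⟪T v, u⟫ : ℂ)‖ ≤ (⟪T u, u⟫).re * (⟪T v, v⟫).re := h
  have h3 : ‖(⟪T v, u⟫ : ℂ)‖ = ‖(⟪T u, v⟫ : ℂ)‖ := by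
    rw [← hadj v u, norm_inner_symm]
  rw [h3] at h2
  nlinarith [norm_nonneg (⟪T u, v⟫ : ℂ)]

/-- Generalized Schwarz inequality for finitely many bounded positive operators
on a complex Hilbert space. -/
theorem stmt1 {H : Type*} [NormedAddCommGroup H] [InnerProductSpace ℂ H] [CompleteSpace H]
    (n : ℕ) (A : Fin n → (H →L[ℂ] H))
    (hpos : ∀ j, ∀ x : H, (⟪A j x, x⟫).im = 0 ∧ 0 ≤ (⟪A j x, x⟫).re)
    (x : Fin n → H) :
    ‖∑ j, A j (x j)‖ ^ 2 ≤ ‖∑ j, A j‖ * ∑ j, (⟪A j (x j), x j⟫).re := by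
  have hApos : ∀ j, (A j).IsPositive := by
    intro j
    rw [ContinuousLinearMap.isPositive_iff_complex]
    intro z
    obtain ⟨h1, h2⟩ := hpos j z
    refine ⟨?_, h2⟩
    exact Complex.ext (by simp) (by simp [h1])
  set y := ∑ j, A j (x j) with hy
  set a : Fin n → ℝ := fun j => (⟪A j (x j), x j⟫).re
  set b : Fin n → ℝ := fun j => (⟪A j y, y⟫).re
  have ha : ∀ j, 0 ≤ a j := fun j => (hpos j (x j)).2
  have hb : ∀ j, 0 ≤ b j := fun j => (hApos j).re_inner_nonneg_left y
  -- key step: ‖y‖² ≤ √(∑ a) * √(∑ b)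
  have key : ‖y‖ ^ 2 ≤ Real.sqrt (∑ j, a j) * Real.sqrt (∑ j, b j) := by
    have h1 : ‖y‖ ^ 2 = (∑ j, (⟪A j (x j), y⟫ : ℂ)).re := by
      rw [← sum_inner, ← hy]
      rw [← inner_self_eq_norm_sq (𝕜 := ℂ) y]
      rfl
    calc ‖y‖ ^ 2 = (∑ j, (⟪A j (x j), y⟫ : ℂ)).re := h1
      _ = ∑ j, ((⟪A j (x j), y⟫ : ℂ)).re := by rw [Complex.re_sum]
      _ ≤ ∑ j, ‖(⟪A j (x j), y⟫ : ℂ)‖ :=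
          Finset.sum_le_sum fun j _ => Complex.re_le_norm _
      _ ≤ ∑ j, Real.sqrt (a j) * Real.sqrt (b j) := by
          refine Finset.sum_le_sum fun j _ => ?_
          rw [← Real.sqrt_mul (ha j)]
          rw [Real.le_sqrt (norm_nonneg _)]
          · exact opSchwarz (A j) (hApos j) (x j) y
          · exact mul_nonneg (ha j) (hb j)
      _ ≤ Real.sqrt (∑ j, a j) * Real.sqrt (∑ j, b j) :=
          Real.sum_sqrt_mul_sqrt_le _ ha hb
  -- bound ∑ b
  have hsumb : ∑ j, b j ≤ ‖∑ j, A j‖ * ‖y‖ ^ 2 := by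
    have : ∑ j, b j = ((⟪(∑ j, A j) y, y⟫ : ℂ)).re := by
      simp [b, ContinuousLinearMap.sum_apply, sum_inner, Complex.re_sum]
    rw [this]
    calc ((⟪(∑ j, A j) y, y⟫ : ℂ)).re ≤ ‖(⟪(∑ j, A j) y, y⟫ : ℂ)‖ := Complex.re_le_norm _
      _ ≤ ‖(∑ j, A j) y‖ * ‖y‖ := norm_inner_le_norm _ _
      _ ≤ (‖∑ j, A j‖ * ‖y‖) * ‖y‖ := by
          gcongr; exact (∑ j, A j).le_opNorm y
      _ = ‖∑ j, A j‖ * ‖y‖ ^ 2 := by ring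
  have hsa : 0 ≤ ∑ j, a j := Finset.sum_nonneg fun j _ => ha j
  have hsb : 0 ≤ ∑ j, b j := Finset.sum_nonneg fun j _ => hb j
  by_cases h0 : ‖y‖ = 0
  · rw [h0]
    simpa using mul_nonneg (norm_nonneg (∑ j, A j)) hsa
  · have hypos : 0 < ‖y‖ ^ 2 := by positivity
    have k2 : (‖y‖ ^ 2) ^ 2 ≤ (∑ j, a j) * (∑ j, b j) := by
      calc (‖y‖ ^ 2) ^ 2 ≤ (Real.sqrt (∑ j, a j) * Real.sqrt (∑ j, b j)) ^ 2 := by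
            nlinarith [key, Real.sqrt_nonneg (∑ j, a j), Real.sqrt_nonneg (∑ j, b j),
              sq_nonneg (‖y‖ : ℝ)]
        _ = (∑ j, a j) * (∑ j, b j) := by
            rw [mul_pow, Real.sq_sqrt hsa, Real.sq_sqrt hsb]
    nlinarith [k2, hsumb, hsa, hypos, mul_le_mul_of_nonneg_left hsumb hsa]
end

section
/- Let H be a complex Hilbert space and A : D → H a linear map on a subspace D ⊆ H satisfying |⟨A x, y⟩|² ≤ M_y · ⟨A x, x⟩ for every y ∈ H and all x ∈ D (with ⟨A x, x⟩ real ≥ 0), where M_y ≥ 0 depends on y. Then the sesquilinear form on the range of A given by ⟨A x, A x'⟩_A := ⟨A x, x'⟩ is well defined (independent of the representatives x, x') and is a positive definite inner product on ran A. -/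
open scoped ComplexInnerProductSpace

/-- Under the domination condition `|⟨A x, y⟩|² ≤ M_y ⟨A x, x⟩`, the sesquilinear form
`⟨A x, A x'⟩_A := ⟨A x, x'⟩` on `ran A` is well defined and positive definite. -/
theorem stmt5 {H : Type*} [NormedAddCommGroup H] [InnerProductSpace ℂ H] [CompleteSpace H]
    (D : Submodule ℂ H) (A : D →ₗ[ℂ] H)
    (hreal : ∀ x : D, (⟪A x, (x : H)⟫).im = 0 ∧ 0 ≤ (⟪A x, (x : H)⟫).re)
    (hM : ∀ y : H, ∃ My : ℝ, 0 ≤ My ∧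
      ∀ x : D, ‖⟪A x, y⟫‖ ^ 2 ≤ My * (⟪A x, (x : H)⟫).re) :
    (∀ x x' y y' : D, A x = A x' → A y = A y' → ⟪A x, (y : H)⟫ = ⟪A x', (y' : H)⟫) ∧
    (∀ x : D, (⟪A x, (x : H)⟫).re = 0 → A x = 0) := by
  -- positive definiteness
  have hpos : ∀ x : D, (⟪A x, (x : H)⟫).re = 0 → A x = 0 := by
    intro x hx
    obtain ⟨My, hMy0, hMyx⟩ := hM (A x)
    have h := hMyx x
    rw [hx, mul_zero] at h
    have habs : ‖⟪A x, A x⟫‖ = 0 := by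
      have := norm_nonneg ⟪A x, A x⟫
      nlinarith
    have : ⟪A x, A x⟫ = 0 := by rwa [norm_eq_zero] at habs
    exact inner_self_eq_zero.mp this
  refine ⟨?_, hpos⟩
  -- Hermitian symmetry of the form B(x,y) = ⟪A x, y⟫
  have hsym : ∀ x y : D, ⟪A y, (x : H)⟫ = star ⟪A x, (y : H)⟫ := by
    intro x y
    have h1 := (hreal (x + y)).1
    have h2 := (hreal (x + Complex.I • y)).1
    simp only [map_add, map_smul, Submodule.coe_add, Submodule.coe_smul,
      inner_add_left, inner_add_right, inner_smul_left, inner_smul_right,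
      Complex.add_im, Complex.mul_im, Complex.mul_re, Complex.conj_re,
      Complex.conj_im, Complex.I_re, Complex.I_im, Complex.add_re, Complex.conj_I,
      Complex.neg_re, Complex.neg_im] at h1 h2
    apply Complex.ext <;> rw [Complex.star_def]
    · rw [Complex.conj_re]; nlinarith [h1, h2, (hreal x).1, (hreal y).1]
    · rw [Complex.conj_im]; nlinarith [h1, h2, (hreal x).1, (hreal y).1]
  -- kernel orthogonality
  have hker : ∀ z x : D, A z = 0 → ⟪A x, (z : H)⟫ = 0 := by
    intro z x hz
    have := hsym x z
    rw [hz, inner_zero_left] at this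
    simpa using congrArg star this.symm
  intro x x' y y' hxx hyy
  have h1 : ⟪A x, (y : H)⟫ = ⟪A x', (y : H)⟫ := by rw [hxx]
  rw [h1]
  have hz : A (y - y') = 0 := by rw [map_sub, hyy, sub_self]
  have h2 := hker (y - y') x' hz
  simp only [Submodule.coe_sub, inner_sub_right] at h2
  exact sub_eq_zero.mp h2
end

section
/- Let H be a complex Hilbert space, D ⊆ H a subspace, and A : D → H a linear operator admitting bounded positive extensions. Among all bounded positive extensions à of A there is a smallest one A_N (the Krein–von Neumann extension): A_N ≤ à for every bounded positive extension Ã, where B ≤ C means ⟨(C−B)x, x⟩ ≥ 0 for all x. Moreover its quadratic form is ⟨A_N y, y⟩ = sup { |⟨A x, y⟩|² : x ∈ D, ⟨A x, x⟩ ≤ 1 } for every y ∈ H. -/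
open scoped ComplexInnerProductSpace

set_option maxHeartbeats 2000000
set_option synthInstance.maxHeartbeats 1000000

/-- A bounded operator `T` on a complex Hilbert space is positive if its quadratic form
is real and nonnegative. -/
def IsPosOp {H : Type*} [NormedAddCommGroup H] [InnerProductSpace ℂ H]
    (T : H →L[ℂ] H) : Prop :=
  ∀ x : H, (⟪T x, x⟫).im = 0 ∧ 0 ≤ (⟪T x, x⟫).re

section Aux

variable {H : Type*} [NormedAddCommGroup H] [InnerProductSpace ℂ H] [CompleteSpace H]

open ContinuousLinearMap

lemma isPosOp_iff_isPositive (T : H →L[ℂ] H) : IsPosOp T ↔ T.IsPositive := by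
  rw [ContinuousLinearMap.isPositive_iff_complex]
  unfold IsPosOp
  refine forall_congr' fun x => and_congr ?_ Iff.rfl
  constructor
  · intro h
    exact Complex.ext (by simp) (by simp [h])
  · intro h
    rw [← h]
    simp

/-- Cauchy–Schwarz for the semi-inner product associated to a positive operator,
proved through the square root from the continuous functional calculus. -/
lemma posOp_cauchy_schwarz (T : H →L[ℂ] H) (hT : 0 ≤ T) (x y : H) :
    ‖⟪T x, y⟫‖ ^ 2 ≤ (⟪T x, x⟫).re * (⟪T y, y⟫).re := by
  set S := CFC.sqrt T with hSdef
  have hS : S * S = T := CFC.sqrt_mul_sqrt_self T hT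
  have hSP : S.IsPositive := (S.nonneg_iff_isPositive).mp (CFC.sqrt_nonneg _)
  have hsym := isSelfAdjoint_iff_isSymmetric.mp hSP.isSelfAdjoint
  have hsym' : ∀ v w : H, ⟪S v, w⟫ = ⟪v, S w⟫ := fun v w => hsym v w
  have hSS : ∀ v, S (S v) = T v := fun v => by rw [← hS]; rfl
  have h1 : ∀ v w : H, ⟪T v, w⟫ = ⟪S v, S w⟫ := fun v w => by
    rw [← hSS, hsym' (S v) w]
  have h2 : ∀ v : H, (⟪T v, v⟫).re = ‖S v‖ ^ 2 := fun v => by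
    rw [h1]
    exact inner_self_eq_norm_sq (𝕜 := ℂ) (S v)
  rw [h1, h2, h2]
  have habs : ‖⟪S x, S y⟫‖ ≤ ‖S x‖ * ‖S y‖ := by
    exact norm_inner_le_norm _ _
  have h0 : 0 ≤ ‖⟪S x, S y⟫‖ := norm_nonneg _
  nlinarith [norm_nonneg (S x), norm_nonneg (S y)]

end Aux

/-- Existence of the minimal (Krein–von Neumann) bounded positive extension, together with
the explicit formula for its quadratic form. -/
theorem stmt8 {H : Type*} [NormedAddCommGroup H] [InnerProductSpace ℂ H] [CompleteSpace H]
    (D : Submodule ℂ H) (A : D →ₗ[ℂ] H)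
    (hform : ∀ x : D, (⟪A x, (x : H)⟫).im = 0 ∧ 0 ≤ (⟪A x, (x : H)⟫).re)
    (hexists : ∃ Atil : H →L[ℂ] H, IsPosOp Atil ∧ ∀ x : D, Atil x = A x) :
    ∃ AN : H →L[ℂ] H, IsPosOp AN ∧ (∀ x : D, AN x = A x) ∧
      (∀ Atil : H →L[ℂ] H, IsPosOp Atil → (∀ x : D, Atil x = A x) → IsPosOp (Atil - AN)) ∧
      (∀ y : H, (⟪AN y, y⟫).re =
        sSup {r : ℝ | ∃ x : D, (⟪A x, (x : H)⟫).re ≤ 1 ∧ r = ‖⟪A x, y⟫‖ ^ 2}) := by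
  classical
  open ContinuousLinearMap in
  obtain ⟨B, hBpos, hBext⟩ := hexists
  have hBP : B.IsPositive := (isPosOp_iff_isPositive B).mp hBpos
  have hB0 : 0 ≤ B := (B.nonneg_iff_isPositive).mpr hBP
  set S := CFC.sqrt B with hSdef
  have hS : S * S = B := CFC.sqrt_mul_sqrt_self B hB0
  have hSP : S.IsPositive := (S.nonneg_iff_isPositive).mp (CFC.sqrt_nonneg _)
  have hsym := isSelfAdjoint_iff_isSymmetric.mp hSP.isSelfAdjoint
  have hsym' : ∀ v w : H, ⟪S v, w⟫ = ⟪v, S w⟫ := fun v w => hsym v w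
  have hSS : ∀ v, S (S v) = B v := fun v => by rw [← hS]; rfl
  set K := D.map (S : H →ₗ[ℂ] H) with hK
  set Kc := K.topologicalClosure with hKc
  haveI : CompleteSpace Kc := K.isClosed_topologicalClosure.completeSpace_coe
  set P : H →L[ℂ] H := Kc.subtypeL ∘L Kc.orthogonalProjectionOnto with hP
  have hPmem : ∀ v, P v ∈ Kc := fun v => SetLike.coe_mem _
  have hPid : ∀ v, v ∈ Kc → P v = v := by
    intro v hv
    show (Kc.orthogonalProjectionOnto v : H) = v
    rw [show v = ((⟨v, hv⟩ : Kc) : H) from rfl, Submodule.orthogonalProjectionOnto_mem_subspace_eq_self]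
  have hPinner : ∀ w v, w ∈ Kc → ⟪w, v⟫ = ⟪w, P v⟫ := by
    intro w v hw
    have horth : v - P v ∈ Kcᗮ := Submodule.sub_starProjection_mem_orthogonal (K := Kc) v
    have h0 : ⟪w, v - P v⟫ = 0 := Submodule.inner_right_of_mem_orthogonal hw horth
    rw [inner_sub_right, sub_eq_zero] at h0
    exact h0
  set AN := S ∘L P ∘L S with hAN
  have hANapp : ∀ v, AN v = S (P (S v)) := fun v => rfl
  have hANinner : ∀ v, ⟪AN v, v⟫ = ((‖P (S v)‖ ^ 2 : ℝ) : ℂ) := by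
    intro v
    rw [hANapp, hsym' (P (S v)) v, hPinner _ _ (hPmem (S v)), inner_self_eq_norm_sq_to_K]
    exact (Complex.ofReal_pow _ _).symm
  have hANext : ∀ x : D, AN x = A x := by
    intro x
    have hx : S (x : H) ∈ Kc :=
      Submodule.le_topologicalClosure K (Submodule.mem_map_of_mem x.2)
    rw [hANapp, hPid _ hx, hSS]
    exact hBext x
  have hAinner_y : ∀ (x : D) (y : H), ⟪A x, y⟫ = ⟪S x, P (S y)⟫ := by
    intro x y
    have hx : S (x : H) ∈ Kc :=
      Submodule.le_topologicalClosure K (Submodule.mem_map_of_mem x.2)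
    rw [← hBext x, ← hSS, hsym' (S x) y]
    exact hPinner _ _ hx
  have hAinner_self : ∀ x : D, (⟪A x, (x : H)⟫).re = ‖S x‖ ^ 2 := by
    intro x
    rw [← hBext x, ← hSS, hsym' (S x) (x : H)]
    exact inner_self_eq_norm_sq (𝕜 := ℂ) (S (x : H))
  -- the sets appearing in the supremum formula
  have hEne : ∀ y : H,
      (0 : ℝ) ∈ {r : ℝ | ∃ x : D, (⟪A x, (x : H)⟫).re ≤ 1 ∧ r = ‖⟪A x, y⟫‖ ^ 2} := by
    intro y
    refine ⟨0, ?_, ?_⟩ <;> simp [map_zero]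
  have hEub : ∀ y : H, ∀ r ∈ {r : ℝ | ∃ x : D, (⟪A x, (x : H)⟫).re ≤ 1 ∧
      r = ‖⟪A x, y⟫‖ ^ 2}, r ≤ ‖P (S y)‖ ^ 2 := by
    rintro y r ⟨x, hx1, rfl⟩
    rw [hAinner_y x y]
    have habs : ‖⟪S (x : H), P (S y)⟫‖ ≤ ‖S (x : H)‖ * ‖P (S y)‖ := by
      exact norm_inner_le_norm _ _
    have hx2 : ‖S (x : H)‖ ^ 2 ≤ 1 := by rw [← hAinner_self x]; exact hx1
    have h0 : 0 ≤ ‖⟪S (x : H), P (S y)⟫‖ := norm_nonneg _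
    nlinarith [norm_nonneg (S (x : H)), norm_nonneg (P (S y))]
  have hbdd : ∀ y : H, BddAbove {r : ℝ | ∃ x : D, (⟪A x, (x : H)⟫).re ≤ 1 ∧
      r = ‖⟪A x, y⟫‖ ^ 2} := fun y => ⟨‖P (S y)‖ ^ 2, fun r hr => hEub y r hr⟩
  -- the supremum formula
  have hmain : ∀ y : H, ‖P (S y)‖ ^ 2 =
      sSup {r : ℝ | ∃ x : D, (⟪A x, (x : H)⟫).re ≤ 1 ∧ r = ‖⟪A x, y⟫‖ ^ 2} := by
    intro y
    refine le_antisymm ?_ (csSup_le ⟨0, hEne y⟩ (hEub y))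
    by_cases ht : ‖P (S y)‖ = 0
    · rw [ht]
      simpa using le_csSup (hbdd y) (hEne y)
    · set v := S y with hv
      have hmemc : P v ∈ closure (K : Set H) := hPmem v
      obtain ⟨u, hu_mem, hu_lim⟩ := mem_closure_iff_seq_limit.mp hmemc
      have hu_mem' : ∀ n, ∃ x : H, x ∈ D ∧ S x = u n := by
        intro n
        obtain ⟨x, hx, hfx⟩ := Submodule.mem_map.mp (hu_mem n)
        exact ⟨x, hx, hfx⟩
      choose x hxD hxS using hu_mem'
      set r : ℕ → ℝ := fun n => (‖u n‖⁻¹ * ‖⟪u n, P v⟫‖) ^ 2 with hr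
      have hr_mem : ∀ n, r n ∈ {r : ℝ | ∃ x : D, (⟪A x, (x : H)⟫).re ≤ 1 ∧
          r = ‖⟪A x, y⟫‖ ^ 2} := by
        intro n
        refine ⟨((‖u n‖⁻¹ : ℝ) : ℂ) • (⟨x n, hxD n⟩ : D), ?_, ?_⟩
        · rw [hAinner_self]
          have hcoe : ((((‖u n‖⁻¹ : ℝ) : ℂ) • (⟨x n, hxD n⟩ : D) : D) : H)
              = ((‖u n‖⁻¹ : ℝ) : ℂ) • x n := rfl
          rw [hcoe, map_smul, hxS n, norm_smul, Complex.norm_real,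
            norm_inv, norm_norm]
          by_cases hn : ‖u n‖ = 0
          · simp [hn]
          · rw [inv_mul_cancel₀ hn, one_pow]
        · rw [hAinner_y]
          have hcoe : ((((‖u n‖⁻¹ : ℝ) : ℂ) • (⟨x n, hxD n⟩ : D) : D) : H)
              = ((‖u n‖⁻¹ : ℝ) : ℂ) • x n := rfl
          rw [hcoe, map_smul, hxS n, inner_smul_left]
          simp only [map_mul, norm_mul, RingHom.id_apply]
          rw [Complex.norm_conj]
          simp only [Complex.norm_real, norm_inv, norm_norm]
          rfl
      have hr_lim : Filter.Tendsto r Filter.atTop (nhds (‖P v‖ ^ 2)) := by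
        have h1 : Filter.Tendsto (fun n => ‖u n‖) Filter.atTop (nhds ‖P v‖) :=
          (continuous_norm.tendsto _).comp hu_lim
        have h2 : Filter.Tendsto (fun n => ⟪u n, P v⟫) Filter.atTop (nhds ⟪P v, P v⟫) :=
          hu_lim.inner tendsto_const_nhds
        have h3 : Filter.Tendsto (fun n => ‖⟪u n, P v⟫‖) Filter.atTop
            (nhds (‖⟪P v, P v⟫‖)) := (continuous_norm.tendsto _).comp h2
        have h4 := ((h1.inv₀ ht).mul h3).pow 2
        have hnorm : ⟪P v, P v⟫ = ((‖P v‖ ^ 2 : ℝ) : ℂ) :=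
          Complex.ext (by rw [Complex.ofReal_re]; exact inner_self_eq_norm_sq (𝕜 := ℂ) (P v))
            (by rw [Complex.ofReal_im]; exact inner_self_im (𝕜 := ℂ) (P v))
        have habs : ‖⟪P v, P v⟫‖ = ‖P v‖ ^ 2 := by
          rw [hnorm, Complex.norm_real, Real.norm_of_nonneg (sq_nonneg _)]
        have hval : (‖P v‖⁻¹ * ‖⟪P v, P v⟫‖) ^ 2 = ‖P v‖ ^ 2 := by
          rw [habs]
          field_simp
        rwa [hval] at h4
      exact le_of_tendsto hr_lim
        (Filter.Eventually.of_forall fun n => le_csSup (hbdd y) (hr_mem n))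
  refine ⟨AN, ?_, hANext, ?_, ?_⟩
  · -- positivity of AN
    intro v
    rw [hANinner v]
    exact ⟨Complex.ofReal_im _, by rw [Complex.ofReal_re]; positivity⟩
  · -- minimality
    intro Atil hpos hext
    have hAtilP : Atil.IsPositive := (isPosOp_iff_isPositive Atil).mp hpos
    have hAtil0 : 0 ≤ Atil := (Atil.nonneg_iff_isPositive).mpr hAtilP
    intro y
    have hsub : ⟪(Atil - AN) y, y⟫ = ⟪Atil y, y⟫ - ⟪AN y, y⟫ := by
      rw [ContinuousLinearMap.sub_apply, inner_sub_left]
    have hAN_im : (⟪AN y, y⟫).im = 0 := by rw [hANinner]; exact Complex.ofReal_im _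
    have hAN_re : (⟪AN y, y⟫).re = ‖P (S y)‖ ^ 2 := by
      rw [hANinner]; exact Complex.ofReal_re _
    have hle : ‖P (S y)‖ ^ 2 ≤ (⟪Atil y, y⟫).re := by
      rw [hmain y]
      refine csSup_le ⟨0, hEne y⟩ ?_
      rintro s ⟨x, hx1, rfl⟩
      rw [← hext x]
      have hcs := posOp_cauchy_schwarz Atil hAtil0 (x : H) y
      have hxx : (⟪Atil (x : H), (x : H)⟫).re ≤ 1 := by rw [hext x]; exact hx1
      have hxx0 : 0 ≤ (⟪Atil (x : H), (x : H)⟫).re := (hpos (x : H)).2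
      have hyy0 : 0 ≤ (⟪Atil y, y⟫).re := (hpos y).2
      nlinarith
    constructor
    · rw [hsub, Complex.sub_im, (hpos y).1, hAN_im]
      ring
    · rw [hsub, Complex.sub_re, hAN_re]
      linarith
  · -- the quadratic form formula
    intro y
    rw [hANinner y, Complex.ofReal_re]
    exact hmain y
end

section
/- Let H be a complex Hilbert space, D ⊆ H a subspace, A : D → H admitting bounded positive extensions, and A_N its minimal (Krein–von Neumann) positive extension. Then ‖A_N‖ = inf { M ≥ 0 : ‖A x‖² ≤ M · ⟨A x, x⟩ for all x ∈ D }. -/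
open scoped ComplexInnerProductSpace

lemma isPosOp_iff {H : Type*} [NormedAddCommGroup H] [InnerProductSpace ℂ H] [CompleteSpace H]
    (T : H →L[ℂ] H) : IsPosOp T ↔ T.IsPositive := by
  rw [ContinuousLinearMap.isPositive_iff_complex]
  constructor
  · intro h x
    obtain ⟨h1, h2⟩ := h x
    exact ⟨by apply Complex.ext <;> simp [h1], h2⟩
  · intro h x
    obtain ⟨h1, h2⟩ := h x
    refine ⟨?_, h2⟩
    have := congrArg Complex.im h1
    simpa using this.symm

/-- The norm of the Krein–von Neumann extension `A_N` is the optimal constant in the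
inequality `‖A x‖² ≤ M ⟨A x, x⟩`. -/
theorem stmt9 {H : Type*} [NormedAddCommGroup H] [InnerProductSpace ℂ H] [CompleteSpace H]
    (D : Submodule ℂ H) (A : D →ₗ[ℂ] H) (AN : H →L[ℂ] H)
    (hANpos : IsPosOp AN) (hANext : ∀ x : D, AN x = A x)
    (hANmin : ∀ Atil : H →L[ℂ] H, IsPosOp Atil → (∀ x : D, Atil x = A x) →
      IsPosOp (Atil - AN)) :
    ‖AN‖ = sInf {M : ℝ | 0 ≤ M ∧ ∀ x : D, ‖A x‖ ^ 2 ≤ M * (⟪A x, (x : H)⟫).re} := by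
  classical
  have hP : AN.IsPositive := (isPosOp_iff AN).mp hANpos
  have hANnn : (0 : H →L[ℂ] H) ≤ AN := (ContinuousLinearMap.nonneg_iff_isPositive AN).mpr hP
  set S : H →L[ℂ] H := CFC.sqrt AN with hSdef
  have hSnn : (0 : H →L[ℂ] H) ≤ S := CFC.sqrt_nonneg AN
  have hSsa : IsSelfAdjoint S := IsSelfAdjoint.of_nonneg hSnn
  have hSsym0 : (S : H →ₗ[ℂ] H).IsSymmetric :=
    ContinuousLinearMap.isSelfAdjoint_iff_isSymmetric.mp hSsa
  have hSsym : ∀ u v : H, ⟪S u, v⟫ = ⟪u, S v⟫ := fun u v => hSsym0 u v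
  have hSS : ∀ y : H, S (S y) = AN y := by
    intro y
    have h : S * S = AN := by
      have := CFC.sq_sqrt AN hANnn
      rwa [sq] at this
    calc S (S y) = (S * S) y := rfl
    _ = AN y := by rw [h]
  -- quadratic form of AN
  have hformAN : ∀ y : H, (⟪AN y, y⟫).re = ‖S y‖ ^ 2 := by
    intro y
    have h9 : ⟪S y, S y⟫ = ((‖S y‖ ^ 2 : ℝ) : ℂ) := by
      rw [inner_self_eq_norm_sq_to_K]; norm_cast
    rw [← hSS y, hSsym (S y) y, h9, Complex.ofReal_re]
  -- A x = AN x, and re⟪A x, x⟫ = ‖S x‖²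
  have hAeq : ∀ x : D, A x = AN (x : H) := fun x => (hANext x).symm
  have hformA : ∀ x : D, (⟪A x, (x : H)⟫).re = ‖S (x : H)‖ ^ 2 := by
    intro x
    rw [hAeq x, hformAN]
  -- norm of AN in terms of S
  have hnormAN : ‖AN‖ = ‖S‖ * ‖S‖ := by
    have h : S * S = AN := by
      have := CFC.sq_sqrt AN hANnn
      rwa [sq] at this
    rw [← h]
    nth_rewrite 1 [← hSsa.star_eq]
    exact CStarRing.norm_star_mul_self
  -- the set
  set T : Set ℝ := {M : ℝ | 0 ≤ M ∧ ∀ x : D, ‖A x‖ ^ 2 ≤ M * (⟪A x, (x : H)⟫).re} with hTdef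
  have hmem : ‖AN‖ ∈ T := by
    refine ⟨norm_nonneg _, fun x => ?_⟩
    rw [hformA x, hAeq x, ← hSS (x : H), hnormAN]
    calc ‖S (S (x : H))‖ ^ 2 ≤ (‖S‖ * ‖S (x : H)‖) ^ 2 := by
          have := S.le_opNorm (S (x : H))
          exact pow_le_pow_left₀ (norm_nonneg _) this 2
    _ = ‖S‖ * ‖S‖ * ‖S (x : H)‖ ^ 2 := by ring
  have hbdd : BddBelow T := ⟨0, fun M hM => hM.1⟩
  refine le_antisymm ?_ (csInf_le hbdd hmem)
  refine le_csInf ⟨‖AN‖, hmem⟩ ?_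
  rintro M ⟨hM0, hM⟩
  -- build the competitor extension B = S ∘ P ∘ S
  set K : Submodule ℂ H := (D.map (S : H →ₗ[ℂ] H)).topologicalClosure with hKdef
  have hSxK : ∀ x : D, S (x : H) ∈ K :=
    fun x => Submodule.le_topologicalClosure _ ⟨(x : H), x.2, rfl⟩
  -- S is bounded by √M on K
  have hkey : ∀ u ∈ K, ‖S u‖ ^ 2 ≤ M * ‖u‖ ^ 2 := by
    intro u hu
    have hclosed : IsClosed {v : H | ‖S v‖ ^ 2 ≤ M * ‖v‖ ^ 2} := by
      apply isClosed_le
      · fun_prop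
      · fun_prop
    have hsub : (D.map (S : H →ₗ[ℂ] H) : Set H) ⊆ {v : H | ‖S v‖ ^ 2 ≤ M * ‖v‖ ^ 2} := by
      rintro v ⟨x, hx, rfl⟩
      simp only [Set.mem_setOf_eq, ContinuousLinearMap.coe_coe]
      have h1 : ‖A ⟨x, hx⟩‖ ^ 2 ≤ M * (⟪A ⟨x, hx⟩, x⟫).re := hM ⟨x, hx⟩
      rw [hformA ⟨x, hx⟩] at h1
      have h3 : A ⟨x, hx⟩ = S (S x) := by
        rw [hAeq ⟨x, hx⟩]
        exact (hSS x).symm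
      rwa [h3] at h1
    have := closure_minimal hsub hclosed
    exact this hu
  -- orthogonal projection onto K
  have hPmem : ∀ v : H, ((K.orthogonalProjection v : H)) ∈ K := fun v => (K.orthogonalProjection v).2
  have hinner : ∀ v : H, ⟪(K.orthogonalProjection v : H), v⟫
      = ((‖(K.orthogonalProjection v : H)‖ ^ 2 : ℝ) : ℂ) := by
    intro v
    set p : H := (K.orthogonalProjection v : H) with hp
    have horth : v - p ∈ Kᗮ := Submodule.sub_starProjection_mem_orthogonal (K := K) v
    have : ⟪p, v - p⟫ = 0 := (Submodule.mem_orthogonal K (v - p)).mp horth p (hPmem v)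
    have h2 : ⟪p, v⟫ = ⟪p, p⟫ + ⟪p, v - p⟫ := by
      rw [← inner_add_right]
      congr 1
      abel
    have h9 : ⟪p, p⟫ = ((‖p‖ ^ 2 : ℝ) : ℂ) := by
      rw [inner_self_eq_norm_sq_to_K]; norm_cast
    rw [h2, this, add_zero, h9]
  set B : H →L[ℂ] H := S ∘L ((K.subtypeL ∘L K.orthogonalProjection) ∘L S) with hBdef
  have hBapply : ∀ y : H, B y = S ((K.orthogonalProjection (S y) : H)) := fun y => rfl
  have hBform : ∀ y : H, ⟪B y, y⟫ = ((‖(K.orthogonalProjection (S y) : H)‖ ^ 2 : ℝ) : ℂ) := by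
    intro y
    rw [hBapply, hSsym _ y, hinner (S y)]
  have hBpos : IsPosOp B := by
    intro y
    rw [hBform]
    constructor
    · exact Complex.ofReal_im _
    · rw [Complex.ofReal_re]
      positivity

  have hBext : ∀ x : D, B x = A x := by
    intro x
    rw [hBapply]
    have h5 : ((K.orthogonalProjection (S (x : H))) : H) = S (x : H) :=
      Submodule.starProjection_eq_self_iff (K := K).mpr (hSxK x)
    rw [h5, hSS]
    exact hANext x
  have hmin := hANmin B hBpos hBext
  -- conclude : ∀ y, ‖S y‖² ≤ M ‖y‖²
  have hSbound : ∀ y : H, ‖S y‖ ≤ Real.sqrt M * ‖y‖ := by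
    intro y
    set p : H := (K.orthogonalProjection (S y) : H) with hp
    have h1 : ‖S y‖ ^ 2 ≤ ‖p‖ ^ 2 := by
      have := (hmin y).2
      have hB : (⟪B y, y⟫).re = ‖p‖ ^ 2 := by rw [hBform, Complex.ofReal_re]
      have hA : (⟪AN y, y⟫).re = ‖S y‖ ^ 2 := hformAN y
      simp only [ContinuousLinearMap.sub_apply, inner_sub_left, Complex.sub_re] at this
      rw [hB, hA] at this
      linarith
    -- ‖p‖² = re⟪S p, y⟫ ≤ ‖S p‖ ‖y‖ ≤ √M ‖p‖ ‖y‖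
    have h2 : ((‖p‖ ^ 2 : ℝ) : ℂ) = ⟪p, S y⟫ := (hinner (S y)).symm
    have h3 : ‖p‖ ^ 2 ≤ ‖S p‖ * ‖y‖ := by
      have : ⟪p, S y⟫ = ⟪S p, y⟫ := (hSsym p y).symm
      have habs : ‖p‖ ^ 2 = ‖⟪S p, y⟫‖ := by
        rw [← this, ← h2, Complex.norm_real, Real.norm_eq_abs, abs_of_nonneg (by positivity)]
      calc ‖p‖ ^ 2 = ‖⟪S p, y⟫‖ := habs
      _ ≤ ‖S p‖ * ‖y‖ := by
          simpa using norm_inner_le_norm (𝕜 := ℂ) (S p) y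
    have h4 : ‖S p‖ ≤ Real.sqrt M * ‖p‖ := by
      have := hkey p (hPmem (S y))
      have h5 : ‖S p‖ ^ 2 ≤ (Real.sqrt M * ‖p‖) ^ 2 := by
        rw [mul_pow, Real.sq_sqrt hM0]
        exact this
      have h6 : (0:ℝ) ≤ Real.sqrt M * ‖p‖ := by positivity
      nlinarith [norm_nonneg (S p)]
    have h7 : ‖p‖ ≤ Real.sqrt M * ‖y‖ := by
      rcases eq_or_lt_of_le (norm_nonneg p) with h | h
      · rw [← h]; positivity
      · have : ‖p‖ ^ 2 ≤ Real.sqrt M * ‖p‖ * ‖y‖ := by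
          calc ‖p‖ ^ 2 ≤ ‖S p‖ * ‖y‖ := h3
          _ ≤ Real.sqrt M * ‖p‖ * ‖y‖ :=
              mul_le_mul_of_nonneg_right h4 (norm_nonneg y)
        nlinarith
    calc ‖S y‖ ≤ ‖p‖ := by nlinarith [norm_nonneg (S y), norm_nonneg p]
    _ ≤ Real.sqrt M * ‖y‖ := h7
  have hSnorm : ‖S‖ ≤ Real.sqrt M := by
    apply ContinuousLinearMap.opNorm_le_bound _ (Real.sqrt_nonneg M) hSbound
  rw [hnormAN]
  calc ‖S‖ * ‖S‖ ≤ Real.sqrt M * Real.sqrt M :=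
    mul_le_mul hSnorm hSnorm (norm_nonneg S) (Real.sqrt_nonneg M)
  _ = M := Real.mul_self_sqrt hM0
end

section
/- Let H = H₀ ⊕ H₀ᗮ be an orthogonal decomposition of a complex Hilbert space, and suppose given bounded operators A₁₁ : H₀ → H₀ with A₁₁ ≥ 0 and A₂₁ : H₀ → H₀ᗮ. If there exists a bounded positive operator B on H whose block matrix has first column (A₁₁, A₂₁) (i.e. B(x ⊕ 0) = A₁₁ x ⊕ A₂₁ x for all x ∈ H₀), then A₂₁* A₂₁ ≤ M · A₁₁ for some constant M ≥ 0. -/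
open scoped ComplexInnerProductSpace

/-- If a positive operator `B` on `H = H₀ ⊕ H₀ᗮ` has first block column `(A₁₁, A₂₁)`,
then `A₂₁*A₂₁ ≤ M·A₁₁` for some `M ≥ 0`, i.e. `‖A₂₁ x‖² ≤ M ⟨A₁₁ x, x⟩`. -/
theorem stmt11 {H : Type*} [NormedAddCommGroup H] [InnerProductSpace ℂ H] [CompleteSpace H]
    (H0 : Submodule ℂ H) (hc : IsClosed (H0 : Set H))
    (A11 : H0 →L[ℂ] H0)
    (hA11 : ∀ x : H0, (⟪A11 x, x⟫).im = 0 ∧ 0 ≤ (⟪A11 x, x⟫).re)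
    (A21 : H0 →L[ℂ] H0ᗮ)
    (B : H →L[ℂ] H)
    (hB : ∀ x : H, (⟪B x, x⟫).im = 0 ∧ 0 ≤ (⟪B x, x⟫).re)
    (hcol : ∀ x : H0, B x = (A11 x : H) + (A21 x : H)) :
    ∃ M : ℝ, 0 ≤ M ∧ ∀ x : H0, ‖A21 x‖ ^ 2 ≤ M * (⟪A11 x, x⟫).re := by
  -- B is positive, hence self-adjoint
  have hBpos : B.IsPositive := by
    rw [ContinuousLinearMap.isPositive_iff_complex]
    intro x
    refine ⟨?_, (hB x).2⟩
    have := (hB x).1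
    apply Complex.ext <;> simp [this]
  have hSA : IsSelfAdjoint B := hBpos.isSelfAdjoint
  refine ⟨‖B‖, norm_nonneg _, fun x => ?_⟩
  set u : H := (x : H)
  set v : H := (A21 x : H)
  have hA11mem : ((A11 x : H)) ∈ H0 := (A11 x).2
  have hvmem : v ∈ H0ᗮ := (A21 x).2
  have humem : u ∈ H0 := x.2
  -- key inner products
  have hBu : B u = (A11 x : H) + v := hcol x
  have hBuv : ⟪B u, v⟫ = ((‖v‖ ^ 2 : ℝ) : ℂ) := by
    rw [hBu, inner_add_left, Submodule.inner_right_of_mem_orthogonal hA11mem hvmem,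
      zero_add, inner_self_eq_norm_sq_to_K]
    norm_cast
  have hBuu : (⟪B u, u⟫).re = (⟪A11 x, x⟫).re := by
    rw [hBu, inner_add_left, Submodule.inner_left_of_mem_orthogonal humem hvmem, add_zero]
    rfl
  have ha : 0 ≤ (⟪A11 x, x⟫).re := (hA11 x).2
  -- quadratic in t : ℝ
  set a : ℝ := (⟪A11 x, x⟫).re
  set c : ℝ := (⟪B v, v⟫).re
  have hc0 : 0 ≤ c := (hB v).2
  have hcle : c ≤ ‖B‖ * ‖v‖ ^ 2 := by
    calc c ≤ ‖⟪B v, v⟫‖ := Complex.re_le_norm _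
      _ ≤ ‖B v‖ * ‖v‖ := norm_inner_le_norm _ _
      _ ≤ (‖B‖ * ‖v‖) * ‖v‖ := by
          exact mul_le_mul_of_nonneg_right (B.le_opNorm v) (norm_nonneg _)
      _ = ‖B‖ * ‖v‖ ^ 2 := by ring
  have hquad : ∀ t : ℝ, 0 ≤ a * t ^ 2 + (2 * ‖v‖ ^ 2) * t + c := by
    intro t
    have h0 : 0 ≤ (⟪B ((t : ℂ) • u + v), (t : ℂ) • u + v⟫).re := (hB _).2
    have hBvu : ⟪B v, u⟫ = (starRingEnd ℂ) ⟪B u, v⟫ := by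
      rw [← ContinuousLinearMap.adjoint_inner_right, hSA.adjoint_eq, ← inner_conj_symm]
    have expand : ⟪B ((t : ℂ) • u + v), (t : ℂ) • u + v⟫
        = (t : ℂ) * (t : ℂ) * ⟪B u, u⟫ + (t : ℂ) * ⟪B u, v⟫
          + (t : ℂ) * ⟪B v, u⟫ + ⟪B v, v⟫ := by
      simp only [map_add, map_smul, inner_add_left, inner_add_right, inner_smul_left,
        inner_smul_right, Complex.conj_ofReal]
      ring
    rw [expand] at h0
    have hre : (⟪B u, v⟫).re = ‖v‖ ^ 2 := by rw [hBuv]; exact Complex.ofReal_re _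
    have him : (⟪B u, v⟫).im = 0 := by rw [hBuv]; exact Complex.ofReal_im _
    have hre' : (⟪B v, u⟫).re = ‖v‖ ^ 2 := by rw [hBvu, Complex.conj_re, hre]
    have him' : (⟪B v, u⟫).im = 0 := by rw [hBvu, Complex.conj_im, him, neg_zero]
    have himuu : (⟪B u, u⟫).im = 0 := (hB u).1
    simp only [Complex.add_re, Complex.mul_re, Complex.mul_im, Complex.ofReal_re,
      Complex.ofReal_im, hre, him, hre', him', himuu, hBuu] at h0
    nlinarith [h0]
  have hdisc : discrim a (2 * ‖v‖ ^ 2) c ≤ 0 := by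
    apply discrim_le_zero
    intro t
    have := hquad t
    nlinarith
  rw [discrim] at hdisc
  -- (2‖v‖²)² - 4 a c ≤ 0, so ‖v‖⁴ ≤ a c ≤ a ‖B‖ ‖v‖²
  by_cases hv : ‖v‖ = 0
  · have h0 : ‖A21 x‖ = 0 := hv
    rw [h0]
    simpa using mul_nonneg (norm_nonneg B) ha
  · have hv2 : 0 < ‖v‖ ^ 2 := by positivity
    have h1 : ‖v‖ ^ 2 * ‖v‖ ^ 2 ≤ a * c := by nlinarith
    have h2 : a * c ≤ a * (‖B‖ * ‖v‖ ^ 2) := mul_le_mul_of_nonneg_left hcle ha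
    have h3 : ‖v‖ ^ 2 * ‖v‖ ^ 2 ≤ (‖B‖ * a) * ‖v‖ ^ 2 := by nlinarith
    have := le_of_mul_le_mul_right h3 hv2
    exact this
end

section
/- Let H = H₀ ⊕ H₀ᗮ, A₁₁ : H₀ → H₀ bounded positive, A₂₁ : H₀ → H₀ᗮ bounded with A₂₁*A₂₁ ≤ M · A₁₁ for some M ≥ 0. Then there exists a bounded positive operator A₂₂ : H₀ᗮ → H₀ᗮ such that the block operator matrix [[A₁₁, A₂₁*],[A₂₁, A₂₂]] is a positive operator on H. (Halmos' positive completion theorem.) -/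
open scoped ComplexInnerProductSpace

lemma stmt12_aux {E : Type*} [NormedAddCommGroup E] [InnerProductSpace ℂ E] (M : ℝ) (y : E) :
    (⟪((M : ℂ) • y), y⟫).im = 0 ∧ (⟪((M : ℂ) • y), y⟫).re = M * ‖y‖ ^ 2 := by
  have him : (⟪y, y⟫ : ℂ).im = 0 := inner_self_im (𝕜 := ℂ) y
  have hre : (⟪y, y⟫ : ℂ).re = ‖y‖ ^ 2 := inner_self_eq_norm_sq (𝕜 := ℂ) y
  rw [inner_smul_left, Complex.conj_ofReal]
  exact ⟨by simp only [Complex.mul_im, Complex.ofReal_re, Complex.ofReal_im, him, mul_zero, zero_mul, add_zero], by simp only [Complex.mul_re, Complex.ofReal_re, Complex.ofReal_im, hre, him, zero_mul, sub_zero]⟩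

/-- Halmos' positive completion theorem: if `A₂₁*A₂₁ ≤ M·A₁₁`, then the incomplete block
matrix `[[A₁₁, A₂₁*],[A₂₁, *]]` can be completed to a positive operator on `H₀ ⊕ H₀ᗮ`. -/
theorem stmt12 {H : Type*} [NormedAddCommGroup H] [InnerProductSpace ℂ H] [CompleteSpace H]
    (H0 : Submodule ℂ H) (hc : IsClosed (H0 : Set H))
    (A11 : H0 →L[ℂ] H0)
    (hA11 : ∀ x : H0, (⟪A11 x, x⟫).im = 0 ∧ 0 ≤ (⟪A11 x, x⟫).re)
    (A21 : H0 →L[ℂ] H0ᗮ) (M : ℝ) (hM : 0 ≤ M)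
    (hdom : ∀ x : H0, ‖A21 x‖ ^ 2 ≤ M * (⟪A11 x, x⟫).re) :
    ∃ A22 : H0ᗮ →L[ℂ] H0ᗮ,
      (∀ y : H0ᗮ, (⟪A22 y, y⟫).im = 0 ∧ 0 ≤ (⟪A22 y, y⟫).re) ∧
      ∀ (x : H0) (y : H0ᗮ),
        0 ≤ (⟪A11 x, x⟫).re + 2 * (⟪((A21 x : H)), (y : H)⟫).re + (⟪A22 y, y⟫).re := by
  refine ⟨(M : ℂ) • ContinuousLinearMap.id ℂ H0ᗮ, ?_, ?_⟩
  · intro y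
    obtain ⟨him, hre⟩ := stmt12_aux M y
    refine ⟨him, ?_⟩
    rw [ContinuousLinearMap.smul_apply, ContinuousLinearMap.id_apply, hre]
    positivity
  · intro x y
    have hre : (⟪(((M : ℂ) • ContinuousLinearMap.id ℂ H0ᗮ) y : H0ᗮ), y⟫).re = M * ‖y‖ ^ 2 := by
      rw [ContinuousLinearMap.smul_apply, ContinuousLinearMap.id_apply]
      exact (stmt12_aux M y).2
    rw [hre]
    set a := (⟪A11 x, x⟫).re with ha
    have ha0 : 0 ≤ a := (hA11 x).2
    have hr : |(⟪((A21 x : H)), (y : H)⟫).re| ≤ ‖A21 x‖ * ‖y‖ := by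
      calc |(⟪((A21 x : H)), (y : H)⟫).re| ≤ ‖(⟪((A21 x : H)), (y : H)⟫ : ℂ)‖ :=
            Complex.abs_re_le_norm _
        _ ≤ ‖(A21 x : H)‖ * ‖(y : H)‖ := norm_inner_le_norm _ _
        _ = ‖A21 x‖ * ‖y‖ := rfl
    have hn : ‖A21 x‖ ^ 2 ≤ M * a := hdom x
    have h1 : ‖A21 x‖ ≤ Real.sqrt (M * a) := by
      have := Real.sqrt_le_sqrt hn
      rwa [Real.sqrt_sq (norm_nonneg _)] at this
    have h2 : Real.sqrt (M * a) = Real.sqrt M * Real.sqrt a := Real.sqrt_mul hM a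
    have hsqM : Real.sqrt M ^ 2 = M := Real.sq_sqrt hM
    have hsqa : Real.sqrt a ^ 2 = a := Real.sq_sqrt ha0
    have key : (0:ℝ) ≤ (Real.sqrt a - Real.sqrt M * ‖y‖) ^ 2 := sq_nonneg _
    have habs : -(⟪((A21 x : H)), (y : H)⟫).re ≤ ‖A21 x‖ * ‖y‖ := by
      have := abs_le.mp hr
      linarith [this.1]
    have hny : (0:ℝ) ≤ ‖y‖ := norm_nonneg _
    nlinarith [mul_le_mul_of_nonneg_right h1 hny, key, hsqM, hsqa,
      Real.sqrt_nonneg M, Real.sqrt_nonneg a]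
end

section
/- Let H be a complex Hilbert space, D ⊆ H a subspace, A : D → H admitting bounded positive extensions with minimal extension A_N, and let B be a bounded positive operator with A_N ≤ B. Define A_max^B := B − (B − A)_N, where (B−A)_N is the Krein–von Neumann extension of the operator B|_D − A : D → H. Then A_max^B is a positive extension of A with A_max^B ≤ B, and every bounded positive extension à of A with à ≤ B satisfies à ≤ A_max^B. -/
open scoped ComplexInnerProductSpace

lemma IsPosOp.add {H : Type*} [NormedAddCommGroup H] [InnerProductSpace ℂ H]
    {S T : H →L[ℂ] H} (hS : IsPosOp S) (hT : IsPosOp T) : IsPosOp (S + T) := by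
  intro x
  have := hS x
  have := hT x
  simp only [ContinuousLinearMap.add_apply, inner_add_left, Complex.add_im, Complex.add_re]
  exact ⟨by rw [(hS x).1, (hT x).1]; ring, by linarith [(hS x).2, (hT x).2]⟩

/-- Existence of the maximal positive extension of `A` bounded above by `B`:
`A_max^B := B − (B−A)_N` is a positive extension of `A`, `A_max^B ≤ B`, and it dominates
every positive extension `Ã ≤ B` of `A`. Here `AN` is the Krein–von Neumann extension of `A`
and `BN'` that of `B|_D − A`. -/
theorem stmt14 {H : Type*} [NormedAddCommGroup H] [InnerProductSpace ℂ H] [CompleteSpace H]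
    (D : Submodule ℂ H) (A : D →ₗ[ℂ] H) (AN B BN' : H →L[ℂ] H)
    (hANpos : IsPosOp AN) (hANext : ∀ x : D, AN x = A x)
    (hANmin : ∀ T : H →L[ℂ] H, IsPosOp T → (∀ x : D, T x = A x) → IsPosOp (T - AN))
    (hBpos : IsPosOp B) (hANB : IsPosOp (B - AN))
    (hBN'pos : IsPosOp BN') (hBN'ext : ∀ x : D, BN' x = B x - A x)
    (hBN'min : ∀ T : H →L[ℂ] H, IsPosOp T → (∀ x : D, T x = B x - A x) →
      IsPosOp (T - BN')) :
    (∀ x : D, (B - BN') x = A x) ∧ IsPosOp (B - BN') ∧ IsPosOp (B - (B - BN')) ∧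
      (∀ Atil : H →L[ℂ] H, IsPosOp Atil → (∀ x : D, Atil x = A x) →
        IsPosOp (B - Atil) → IsPosOp ((B - BN') - Atil)) := by
  have hext : ∀ x : D, (B - BN') x = A x := by
    intro x
    simp [ContinuousLinearMap.sub_apply, hBN'ext x]
  have key : IsPosOp ((B - AN) - BN') := by
    apply hBN'min _ hANB
    intro x
    simp [ContinuousLinearMap.sub_apply, hANext x]
  refine ⟨hext, ?_, ?_, ?_⟩
  · have : B - BN' = ((B - AN) - BN') + AN := by abel
    rw [this]; exact key.add hANpos
  · have : B - (B - BN') = BN' := by abel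
    rw [this]; exact hBN'pos
  · intro Atil hpos hAext hBA
    have h1 : IsPosOp ((B - Atil) - BN') := by
      apply hBN'min _ hBA
      intro x
      simp [ContinuousLinearMap.sub_apply, hAext x]
    have : (B - BN') - Atil = (B - Atil) - BN' := by abel
    rw [this]; exact h1
end
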